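/- (0-1-2 Lemma.) Let p : H → Q be a surjective group homomorphism where H is finitely generated and Q is finitely presented, and let P ≤ H × H be the associated fibre product. Then P is finitely generated. -/

import Mathlib

/-- A group is finitely presented if it is the quotient of a finitely generated free
group by the normal closure of finitely many relators. -/
def FinitelyPresentedGroup (Q : Type*) [Group Q] : Prop :=
  ∃ (n : ℕ) (rels : Finset (FreeGroup (Fin n))) (π : FreeGroup (Fin n) →* Q),
    Function.Surjective π ∧ π.ker = Subgroup.normalClosure (rels : Set (FreeGroup (Fin n)))

/-- The kernel of a surjection from a f.g. group onto a f.p. group is normally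
finitely generated. -/
lemma ker_normally_fg {H Q : Type*} [Group H] [Group Q] [Group.FG H]
    (hQ : FinitelyPresentedGroup Q) (p : H →* Q) (hp : Function.Surjective p) :
    ∃ T : Set H, T.Finite ∧ p.ker = Subgroup.normalClosure T := by
  obtain ⟨n, rels, π, hπs, hπk⟩ := hQ
  obtain ⟨S, hSclo, hSfin⟩ := Group.fg_iff.mp ‹Group.FG H›
  -- a section on generators: σ : F_n → H with p ∘ σ = π
  set σ : FreeGroup (Fin n) →* H :=
    FreeGroup.lift (fun i => Classical.choose (hp (π (FreeGroup.of i)))) with hσdef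
  have hσ : ∀ w, p (σ w) = π w := by
    intro w
    have : p.comp σ = π := by
      apply FreeGroup.ext_hom
      intro a
      simp [hσdef, Classical.choose_spec (hp (π (FreeGroup.of a)))]
    exact DFunLike.congr_fun this w
  -- words representing the images of generators
  set w : H → FreeGroup (Fin n) := fun s => Classical.choose (hπs (p s)) with hwdef
  have hw : ∀ s, π (w s) = p s := fun s => Classical.choose_spec (hπs (p s))
  set T : Set H := σ '' (rels : Set (FreeGroup (Fin n))) ∪ (fun s => s * (σ (w s))⁻¹) '' S
    with hTdef
  refine ⟨T, (((rels : Set (FreeGroup (Fin n))).toFinite.image σ).union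
    (hSfin.image _)), ?_⟩
  set K := Subgroup.normalClosure T with hK
  have hTker : T ⊆ (p.ker : Set H) := by
    rintro x (⟨r, hr, rfl⟩ | ⟨s, hs, rfl⟩)
    · have : r ∈ π.ker := by
        rw [hπk]; exact Subgroup.subset_normalClosure hr
      simpa [MonoidHom.mem_ker, hσ] using this
    · simp [MonoidHom.mem_ker, hσ, hw]
  have hKle : K ≤ p.ker := Subgroup.normalClosure_le_normal hTker
  refine le_antisymm ?_ hKle
  -- the induced map ψ : F_n → H/K kills the relators
  set ψ : FreeGroup (Fin n) →* H ⧸ K := (QuotientGroup.mk' K).comp σ with hψdef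
  have hψker : π.ker ≤ ψ.ker := by
    rw [hπk]
    apply Subgroup.normalClosure_le_normal
    intro r hr
    have : σ r ∈ K := Subgroup.subset_normalClosure (Or.inl ⟨r, hr, rfl⟩)
    simpa [hψdef, MonoidHom.mem_ker, QuotientGroup.eq_one_iff] using this
  -- factor ψ through Q
  set qbar : Q →* H ⧸ K :=
    π.liftOfRightInverse (Function.surjInv hπs) (Function.rightInverse_surjInv hπs)
      ⟨ψ, hψker⟩ with hqdef
  have hqπ : ∀ x, qbar (π x) = ψ x := fun x =>
    π.liftOfRightInverse_comp_apply _ (Function.rightInverse_surjInv hπs) ⟨ψ, hψker⟩ x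
  -- qbar ∘ p = mk, checked on generators
  have hqp : qbar.comp p = QuotientGroup.mk' K := by
    apply MonoidHom.eq_of_eqOn_dense hSclo
    intro s hs
    have h1 : s * (σ (w s))⁻¹ ∈ K := Subgroup.subset_normalClosure (Or.inr ⟨s, hs, rfl⟩)
    have hps : qbar (p s) = QuotientGroup.mk' K (σ (w s)) := by
      rw [← hw s, hqπ]; rfl
    have h3 : (QuotientGroup.mk' K) (s * (σ (w s))⁻¹) = 1 :=
      (QuotientGroup.eq_one_iff _).mpr h1
    rw [map_mul, map_inv] at h3
    have h2 := mul_inv_eq_one.mp h3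
    show (qbar.comp p) s = (QuotientGroup.mk' K) s
    rw [MonoidHom.comp_apply, hps, h2]
  intro h hh
  have : QuotientGroup.mk' K h = qbar (p h) := (DFunLike.congr_fun hqp h).symm
  rw [MonoidHom.mem_ker.mp hh, map_one] at this
  exact (QuotientGroup.eq_one_iff h).mp this

/-- 0-1-2 Lemma: If `p : H → Q` is surjective, `H` is finitely
generated and `Q` is finitely presented, then the fibre product `P ≤ H × H` is
finitely generated. -/
theorem stmt_15 {H Q : Type*} [Group H] [Group Q] [Group.FG H]
    (hQ : FinitelyPresentedGroup Q)
    (p : H →* Q) (hp : Function.Surjective p)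
    (P : Subgroup (H × H))
    (hP : P = MonoidHom.eqLocus (p.comp (MonoidHom.fst H H)) (p.comp (MonoidHom.snd H H))) :
    Group.FG P := by
  obtain ⟨T, hTfin, hTker⟩ := ker_normally_fg hQ p hp
  obtain ⟨S, hSclo, hSfin⟩ := Group.fg_iff.mp ‹Group.FG H›
  set gens : Set (H × H) := (fun h => (h, h)) '' S ∪ (fun n => (n, 1)) '' T with hgens
  rw [Group.fg_iff_subgroup_fg, Subgroup.fg_iff]
  refine ⟨gens, ?_, (hSfin.image _).union (hTfin.image _)⟩
  -- diagonal elements are in the closure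
  have hdiag : ∀ h : H, (h, h) ∈ Subgroup.closure gens := by
    have : ∀ h ∈ Subgroup.closure S, (h, h) ∈ Subgroup.closure gens := by
      intro h hh
      refine Subgroup.closure_induction (fun x hx => Subgroup.subset_closure
        (Or.inl ⟨x, hx, rfl⟩)) (by exact (Subgroup.closure gens).one_mem)
        (fun x y _ _ hx hy => by simpa using (Subgroup.closure gens).mul_mem hx hy)
        (fun x _ hx => by simpa using (Subgroup.closure gens).inv_mem hx) hh
    exact fun h => this h (hSclo ▸ Subgroup.mem_top h)
  -- the set of n with (n,1) in the closure forms a normal subgroup containing T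
  set K : Subgroup H := Subgroup.comap ((MonoidHom.id H).prod 1) (Subgroup.closure gens)
    with hKdef
  have hKmem : ∀ n, n ∈ K ↔ (n, (1 : H)) ∈ Subgroup.closure gens := by
    intro n; rfl
  have hKnormal : K.Normal := by
    constructor
    intro x hx g
    rw [hKmem] at hx ⊢
    have : ((g, g) : H × H) * (x, 1) * (g, g)⁻¹ ∈ Subgroup.closure gens :=
      (Subgroup.closure gens).mul_mem ((Subgroup.closure gens).mul_mem (hdiag g) hx)
        ((Subgroup.closure gens).inv_mem (hdiag g))
    simpa using this
  have hTK : T ⊆ (K : Set H) := fun n hn =>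
    (hKmem n).mpr (Subgroup.subset_closure (Or.inr ⟨n, hn, rfl⟩))
  have hkerK : p.ker ≤ K := by
    rw [hTker]
    exact Subgroup.normalClosure_le_normal hTK
  -- now prove the two inclusions
  apply le_antisymm
  · rw [Subgroup.closure_le, hP]
    rintro x (⟨s, _, rfl⟩ | ⟨n, hn, rfl⟩)
    · show p s = p s; rfl
    · show p n = p 1
      have : n ∈ p.ker := by
        rw [hTker]; exact Subgroup.subset_normalClosure hn
      simp [MonoidHom.mem_ker.mp this]
  · rintro ⟨h₁, h₂⟩ hx
    have hx' : p h₁ = p h₂ := by rw [hP] at hx; exact hx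
    have h1 : h₁ * h₂⁻¹ ∈ p.ker := by
      simp [MonoidHom.mem_ker, hx']
    have h2 : ((h₁ * h₂⁻¹, 1) : H × H) ∈ Subgroup.closure gens := (hKmem _).mp (hkerK h1)
    have := (Subgroup.closure gens).mul_mem h2 (hdiag h₂)
    simp only [Prod.mk_mul_mk, inv_mul_cancel_right, one_mul] at this
    exact this
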